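/- Let K be a compact subset of ℝ^d. The set of points p ∈ ℝ^d that admit more than one nearest point in K (i.e., the set of p for which the minimum of ‖p − q‖ over q ∈ K is attained at at least two distinct points of K) has Lebesgue measure zero in ℝ^d. -/

import Mathlib

open Metric Set

set_option maxHeartbeats 1000000 in
/-- **The medial axis of a compact set has Lebesgue measure zero.**
Let `K` be a compact subset of `ℝ^d`.  The set of points `p ∈ ℝ^d` that admit more than
one nearest point in `K` (i.e. the minimum of `‖p − q‖` over `q ∈ K` is attained at at
least two distinct points of `K`) has Lebesgue measure zero in `ℝ^d`. -/
theorem medial_axis_measure_zero {d : ℕ} (K : Set (EuclideanSpace ℝ (Fin d)))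
    (hK : IsCompact K) :
    MeasureTheory.volume
      {p : EuclideanSpace ℝ (Fin d) |
        ∃ q₁ ∈ K, ∃ q₂ ∈ K, q₁ ≠ q₂ ∧
          (∀ q ∈ K, ‖p - q₁‖ ≤ ‖p - q‖) ∧ (∀ q ∈ K, ‖p - q₂‖ ≤ ‖p - q‖)} = 0 := by
  set f : EuclideanSpace ℝ (Fin d) → ℝ := fun x => infDist x K with hfdef
  have hlip : LipschitzWith 1 f := lipschitz_infDist_pt K
  have hsub : {p : EuclideanSpace ℝ (Fin d) |
        ∃ q₁ ∈ K, ∃ q₂ ∈ K, q₁ ≠ q₂ ∧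
          (∀ q ∈ K, ‖p - q₁‖ ≤ ‖p - q‖) ∧ (∀ q ∈ K, ‖p - q₂‖ ≤ ‖p - q‖)} ⊆
      {p : EuclideanSpace ℝ (Fin d) | ¬ DifferentiableAt ℝ f p} := by
    intro p hp
    obtain ⟨q₁, hq₁, q₂, hq₂, hne, hmin₁, hmin₂⟩ := hp
    intro hdiff
    have hKne : K.Nonempty := ⟨q₁, hq₁⟩
    haveI : Nonempty K := hKne.to_subtype
    set L := fderiv ℝ f p with hL
    -- infDist equals dist to any nearest point
    have hfp_eq : ∀ q ∈ K, (∀ q' ∈ K, ‖p - q‖ ≤ ‖p - q'‖) → f p = ‖p - q‖ := by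
      intro q hq hmin
      refine le_antisymm ?_ ?_
      · simpa [dist_eq_norm] using infDist_le_dist_of_mem (x := p) hq
      · rw [hfdef]
        simp only [infDist_eq_iInf]
        refine le_ciInf fun y => ?_
        rw [dist_eq_norm]
        exact hmin y y.2
    -- key: the derivative in the direction of a nearest point
    have key : ∀ q ∈ K, (∀ q' ∈ K, ‖p - q‖ ≤ ‖p - q'‖) → L (q - p) = -‖q - p‖ := by
      intro q hq hmin
      set v : EuclideanSpace ℝ (Fin d) := q - p with hv
      have hfp : f p = ‖v‖ := by
        rw [hfp_eq q hq hmin, hv, norm_sub_rev]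
      have hg : ∀ t ∈ Icc (0:ℝ) 1, f (p + t • v) = ‖v‖ - t * ‖v‖ := by
        rintro t ⟨ht0, ht1⟩
        refine le_antisymm ?_ ?_
        · have h1 : f (p + t • v) ≤ dist (p + t • v) q := infDist_le_dist_of_mem hq
          have h2 : p + t • v - q = -((1 - t) • v) := by
            rw [hv]; module
          rw [dist_eq_norm, h2, norm_neg, norm_smul, Real.norm_eq_abs,
            abs_of_nonneg (by linarith)] at h1
          linarith [h1]
        · have h1 : f p ≤ f (p + t • v) + dist p (p + t • v) :=
            infDist_le_infDist_add_dist
          have h2 : dist p (p + t • v) = t * ‖v‖ := by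
            rw [dist_eq_norm]
            have : p - (p + t • v) = -(t • v) := by module
            rw [this, norm_neg, norm_smul, Real.norm_eq_abs, abs_of_nonneg ht0]
          rw [hfp, h2] at h1
          linarith
      have hc : HasDerivAt (fun t : ℝ => p + t • v) v 0 := by
        simpa using ((hasDerivAt_id (0:ℝ)).smul_const v).const_add p
      have hfd : HasFDerivAt f L ((fun t : ℝ => p + t • v) 0) := by
        simpa using hdiff.hasFDerivAt
      have h1 : HasDerivWithinAt (fun t : ℝ => f (p + t • v)) (L v) (Icc 0 1) 0 :=
        (HasFDerivAt.comp_hasDerivAt (f := fun t : ℝ => p + t • v) 0 hfd hc).hasDerivWithinAt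
      have haff : HasDerivWithinAt (fun t : ℝ => ‖v‖ - t * ‖v‖) (-‖v‖) (Icc 0 1) 0 := by
        simpa using (((hasDerivAt_id (0:ℝ)).mul_const ‖v‖).const_sub ‖v‖).hasDerivWithinAt
          (s := Icc (0:ℝ) 1)
      have h2 : HasDerivWithinAt (fun t : ℝ => f (p + t • v)) (-‖v‖) (Icc 0 1) 0 := by
        refine haff.congr (fun y hy => hg y hy) ?_
        simpa using hg 0 ⟨le_refl 0, zero_le_one⟩
      have h0 : UniqueDiffWithinAt ℝ (Icc (0:ℝ) 1) 0 :=
        uniqueDiffOn_Icc_zero_one 0 ⟨le_refl 0, zero_le_one⟩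
      exact h0.eq_deriv _ h1 h2
    have hLv₁ := key q₁ hq₁ hmin₁
    have hLv₂ := key q₂ hq₂ hmin₂
    set v₁ : EuclideanSpace ℝ (Fin d) := q₁ - p
    set v₂ : EuclideanSpace ℝ (Fin d) := q₂ - p
    have hnorm_eq : ‖v₁‖ = ‖v₂‖ := by
      have e1 := hfp_eq q₁ hq₁ hmin₁
      have e2 := hfp_eq q₂ hq₂ hmin₂
      have : ‖p - q₁‖ = ‖p - q₂‖ := by rw [← e1, ← e2]
      simpa [v₁, v₂, norm_sub_rev p q₁, norm_sub_rev p q₂] using this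
    have hLnorm : ‖L‖ ≤ 1 := by
      simpa using norm_fderiv_le_of_lipschitz ℝ hlip (x₀ := p)
    have hsum : ‖v₁‖ + ‖v₂‖ ≤ ‖v₁ + v₂‖ := by
      have h1 : L (v₁ + v₂) = -(‖v₁‖ + ‖v₂‖) := by
        rw [map_add, hLv₁, hLv₂]; ring
      have h2 : ‖L (v₁ + v₂)‖ ≤ ‖L‖ * ‖v₁ + v₂‖ := L.le_opNorm _
      have h3 : ‖L (v₁ + v₂)‖ = ‖v₁‖ + ‖v₂‖ := by
        rw [h1, Real.norm_eq_abs, abs_neg, abs_of_nonneg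
          (by positivity : (0:ℝ) ≤ ‖v₁‖ + ‖v₂‖)]
      nlinarith [norm_nonneg (v₁ + v₂)]
    have hpar : ‖v₁ + v₂‖ ^ 2 + ‖v₁ - v₂‖ ^ 2 = 2 * (‖v₁‖ ^ 2 + ‖v₂‖ ^ 2) := by
      have := parallelogram_law_with_norm ℝ v₁ v₂
      nlinarith [this]
    have hzero : ‖v₁ - v₂‖ = 0 := by
      nlinarith [norm_nonneg (v₁ - v₂), norm_nonneg v₁, norm_nonneg v₂,
        norm_nonneg (v₁ + v₂)]
    have : v₁ = v₂ := by
      rwa [← sub_eq_zero, ← norm_eq_zero]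
    exact hne (by have : q₁ - p = q₂ - p := this; simpa [sub_left_inj] using this)
  exact MeasureTheory.measure_mono_null hsub
    (MeasureTheory.ae_iff.mp hlip.ae_differentiableAt)
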